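/- Let A ∈ ℝ^{n×n}, B ∈ ℝ^{n×m}, C ∈ ℝ^{p×n}, E ∈ ℝ^{n×r}, and let U_p ∈ ℝ^{m×N}, D_p ∈ ℝ^{r×N}, X_p, X_f ∈ ℝ^{n×N}, Y_f ∈ ℝ^{p×N} satisfy X_f = A·X_p + B·U_p + E·D_p and Y_f = C·X_f, with the stacked (m+r+n)×N matrix [U_p; D_p; X_p] of full row rank m+r+n. Suppose that for every nonzero z ∈ ℂ the complex (n+p)×(n+r) block matrix [[z·I_n − A, −E],[C, 0]] has rank n + r, and that [C·B C·E] has rank m + r. Then there exist matrices T₁ ∈ ℝ^{n×m}, T₃ ∈ ℝ^{n×n}, T₄ ∈ ℝ^{n×p} such that X_f = T₁·U_p + T₃·X_p + T₄·Y_f, the pair (T₃, C) is reconstructable (i.e. there exists L ∈ ℝ^{n×p} with T₃ − L·C nilpotent), and C·T₁ has full column rank m. -/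

import Mathlib

open Matrix Polynomial

namespace Stmt10Aux

noncomputable section




variable {k l nn pp : ℕ}

/-- complexification of a real matrix -/
def cx (M : Matrix (Fin k) (Fin l) ℝ) : Matrix (Fin k) (Fin l) ℂ :=
  M.map (algebraMap ℝ ℂ)

lemma cx_mul (M : Matrix (Fin k) (Fin l) ℝ) (N : Matrix (Fin l) (Fin nn) ℝ) :
    cx (M * N) = cx M * cx N := by
  simp only [cx, Matrix.map_mul]

lemma cx_sub (M N : Matrix (Fin k) (Fin l) ℝ) : cx (M - N) = cx M - cx N := by
  simp only [cx]
  ext i j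
  simp

lemma cx_pow (M : Matrix (Fin k) (Fin k) ℝ) (j : ℕ) : cx (M ^ j) = (cx M) ^ j := by
  have : cx M = (algebraMap ℝ ℂ).mapMatrix M := rfl
  simp only [cx] at *
  induction j with
  | zero => ext i j; by_cases h : i = j <;> simp [h, Matrix.one_apply]
  | succ j ih => rw [pow_succ, pow_succ, Matrix.map_mul, ih]

lemma cx_inj (M N : Matrix (Fin k) (Fin l) ℝ) (h : cx M = cx N) : M = N := by
  ext i j
  have := congrFun (congrFun h i) j
  simpa [cx] using this

lemma mulVec_cx_ofReal (M : Matrix (Fin k) (Fin l) ℝ) (x : Fin l → ℝ) :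
    cx M *ᵥ (fun j => (x j : ℂ)) = fun i => ((M *ᵥ x) i : ℂ) := by
  funext i
  simp [cx, Matrix.mulVec, dotProduct]

lemma mulVec_cx_re (M : Matrix (Fin k) (Fin l) ℝ) (v : Fin l → ℂ) (i : Fin k) :
    ((cx M *ᵥ v) i).re = (M *ᵥ fun j => (v j).re) i := by
  simp [cx, Matrix.mulVec, dotProduct, Complex.re_sum]

lemma mulVec_cx_im (M : Matrix (Fin k) (Fin l) ℝ) (v : Fin l → ℂ) (i : Fin k) :
    ((cx M *ᵥ v) i).im = (M *ᵥ fun j => (v j).im) i := by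
  simp [cx, Matrix.mulVec, dotProduct, Complex.im_sum]

lemma vecMulVec_mulVec (u : Fin k → ℝ) (w : Fin l → ℝ) (x : Fin l → ℝ) :
    vecMulVec u w *ᵥ x = (w ⬝ᵥ x) • u := by
  funext i
  simp [Matrix.vecMulVec, Matrix.mulVec, dotProduct, Finset.mul_sum, Finset.sum_mul,
    mul_comm, mul_assoc, mul_left_comm]

/-- full column rank iff injective -/
lemma rank_eq_card_iff_inj {K : Type*} [Field K] {a b : Type*} [Fintype a] [Fintype b]
    [DecidableEq b] (M : Matrix a b K) :
    M.rank = Fintype.card b ↔ Function.Injective M.mulVecLin := by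
  have h := LinearMap.finrank_range_add_finrank_ker M.mulVecLin
  rw [Module.finrank_pi] at h
  constructor
  · intro hr
    rw [← LinearMap.ker_eq_bot]
    rw [Matrix.rank] at hr
    rw [hr] at h
    have : Module.finrank K (LinearMap.ker M.mulVecLin) = 0 := by omega
    exact Submodule.finrank_eq_zero.mp this
  · intro hinj
    rw [Matrix.rank]
    have : LinearMap.ker M.mulVecLin = ⊥ := LinearMap.ker_eq_bot.mpr hinj
    rw [this] at h
    simpa using h





variable {nn pp : ℕ}

/-- generalized kernel -/
def GK (φ : Module.End ℝ (Fin nn → ℝ)) : Submodule ℝ (Fin nn → ℝ) :=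
  ⨆ j : ℕ, LinearMap.ker (φ ^ j)

lemma ker_pow_mono (φ : Module.End ℝ (Fin nn → ℝ)) {i j : ℕ} (h : i ≤ j) :
    LinearMap.ker (φ ^ i) ≤ LinearMap.ker (φ ^ j) := by
  intro x hx
  rw [LinearMap.mem_ker] at hx ⊢
  obtain ⟨d, rfl⟩ := Nat.exists_eq_add_of_le h
  rw [add_comm, pow_add, Module.End.mul_apply, hx, map_zero]

lemma mem_GK {φ : Module.End ℝ (Fin nn → ℝ)} {x : Fin nn → ℝ} :
    x ∈ GK φ ↔ ∃ j : ℕ, (φ ^ j) x = 0 := by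
  rw [GK, Submodule.mem_iSup_of_directed]
  · simp [LinearMap.mem_ker]
  · intro i j
    exact ⟨max i j, ker_pow_mono φ (le_max_left i j), ker_pow_mono φ (le_max_right i j)⟩

lemma mulVecLin_pow (F : Matrix (Fin nn) (Fin nn) ℝ) (j : ℕ) :
    (F ^ j).mulVecLin = F.mulVecLin ^ j := by
  induction j with
  | zero => simp [Matrix.mulVecLin_one]; rfl
  | succ j ih => rw [pow_succ, pow_succ, Matrix.mulVecLin_mul, ih]; rfl

lemma isNilpotent_of_GK_top {F : Matrix (Fin nn) (Fin nn) ℝ}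
    (h : GK F.mulVecLin = ⊤) : IsNilpotent F := by
  have h3 : ∀ m : Fin nn → ℝ, ∃ j : ℕ, (F.mulVecLin ^ j) m = 0 := by
    intro m
    exact mem_GK.mp (h ▸ Submodule.mem_top)
  have := (LinearMap.charpoly_nilpotent_tfae F.mulVecLin).out 2 0
  obtain ⟨j, hj⟩ := this.mp h3
  refine ⟨j, ?_⟩
  have hml : (F ^ j).mulVecLin = 0 := by
    rw [mulVecLin_pow, hj]
  ext i j'
  have h2 : (F ^ j) *ᵥ Pi.single j' 1 = 0 := by
    rw [← Matrix.mulVecLin_apply, hml]; rfl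
  have := congrFun h2 i
  simpa [Matrix.mulVec_single] using this



variable {nn pp : ℕ}

lemma GK_lt (F : Matrix (Fin nn) (Fin nn) ℝ) (L : Matrix (Fin nn) (Fin pp) ℝ)
    (C : Matrix (Fin pp) (Fin nn) ℝ) (V : Submodule ℝ (Fin nn → ℝ)) (hne : V ≠ ⊥)
    (hFV : ∀ x ∈ V, F *ᵥ x ∈ V)
    (hinj : ∀ x ∈ V, F *ᵥ x = 0 → x = 0)
    (hLC : ∀ x, (L * C) *ᵥ x ∈ V)
    (hnil : ∀ x ∈ V, (F - L * C) *ᵥ ((F - L * C) *ᵥ x) = 0) :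
    Module.finrank ℝ (GK F.mulVecLin) < Module.finrank ℝ (GK (F - L * C).mulVecLin) := by
  set φ := (F - L * C).mulVecLin with hφ
  set ψ := F.mulVecLin with hψ
  have hφx : ∀ x, φ x = F *ᵥ x - (L * C) *ᵥ x := by
    intro x; rw [hφ, Matrix.mulVecLin_apply, Matrix.sub_mulVec]
  have hψx : ∀ x, ψ x = F *ᵥ x := fun x => Matrix.mulVecLin_apply _ _
  have hφV : ∀ x ∈ V, φ x ∈ V := by
    intro x hx; rw [hφx]; exact sub_mem (hFV x hx) (hLC x)
  have hdiffV : ∀ x, ψ x - φ x ∈ V := by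
    intro x; rw [hφx, hψx]
    have : F *ᵥ x - (F *ᵥ x - (L * C) *ᵥ x) = (L * C) *ᵥ x := by ring
    rw [this]; exact hLC x
  have hφ2 : ∀ x ∈ V, φ (φ x) = 0 := by
    intro x hx
    have := hnil x hx
    rw [hφ, Matrix.mulVecLin_apply, Matrix.mulVecLin_apply]
    exact this
  -- difference of powers lies in V
  have hpowdiff : ∀ (j : ℕ) (x : Fin nn → ℝ), (φ ^ j) x - (ψ ^ j) x ∈ V := by
    intro j
    induction j with
    | zero => intro x; simp
    | succ j ih =>
      intro x
      have h1 : (φ ^ (j+1)) x - (ψ ^ (j+1)) x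
          = φ ((φ ^ j) x - (ψ ^ j) x) + (φ ((ψ ^ j) x) - ψ ((ψ ^ j) x)) := by
        rw [pow_succ', pow_succ', Module.End.mul_apply, Module.End.mul_apply, map_sub]
        ring
      rw [h1]
      refine add_mem (hφV _ (ih x)) ?_
      have := hdiffV ((ψ ^ j) x)
      have h2 : φ ((ψ ^ j) x) - ψ ((ψ ^ j) x) = -(ψ ((ψ ^ j) x) - φ ((ψ ^ j) x)) := by ring
      rw [h2]; exact neg_mem this
  -- GK ψ ≤ GK φ
  have hGKle : GK ψ ≤ GK φ := by
    intro x hx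
    obtain ⟨j, hj⟩ := mem_GK.mp hx
    refine mem_GK.mpr ⟨j + 2, ?_⟩
    have h1 : (φ ^ j) x ∈ V := by
      have := hpowdiff j x
      rwa [hj, sub_zero] at this
    have h2 : (φ ^ (j+2)) x = φ (φ ((φ ^ j) x)) := by
      rw [show j + 2 = (j + 1) + 1 by ring, pow_succ', pow_succ', Module.End.mul_apply,
        Module.End.mul_apply]
    rw [h2, hφ2 _ h1]
  -- V ≤ GK φ
  have hVle : V ≤ GK φ := by
    intro x hx
    refine mem_GK.mpr ⟨2, ?_⟩
    have : (φ ^ 2) x = φ (φ x) := by rw [pow_two, Module.End.mul_apply]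
    rw [this, hφ2 _ hx]
  -- V ⊓ GK ψ = ⊥
  have hVinj : ∀ (j : ℕ), ∀ x ∈ V, (ψ ^ j) x = 0 → x = 0 := by
    intro j
    induction j with
    | zero => intro x _ hx; simpa using hx
    | succ j ih =>
      intro x hx hjx
      have h1 : (ψ ^ (j+1)) x = (ψ ^ j) (ψ x) := by
        rw [pow_succ, Module.End.mul_apply]
      have h2 : ψ x ∈ V := by rw [hψx]; exact hFV x hx
      have h3 : ψ x = 0 := ih (ψ x) h2 (by rw [← h1]; exact hjx)
      exact hinj x hx (by rw [← hψx]; exact h3)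
  have hbot : V ⊓ GK ψ = ⊥ := by
    rw [Submodule.eq_bot_iff]
    rintro x ⟨hxV, hxGK⟩
    obtain ⟨j, hj⟩ := mem_GK.mp hxGK
    exact hVinj j x hxV hj
  -- conclude via finrank
  have hsup : V ⊔ GK ψ ≤ GK φ := sup_le hVle hGKle
  have h1 : Module.finrank ℝ (V ⊔ GK ψ : Submodule ℝ (Fin nn → ℝ)) ≤
      Module.finrank ℝ (GK φ) := Submodule.finrank_mono hsup
  have h2 := Submodule.finrank_sup_add_finrank_inf_eq V (GK ψ)
  rw [hbot] at h2
  rw [show Module.finrank ℝ (⊥ : Submodule ℝ (Fin nn → ℝ)) = 0 by simp, add_zero] at h2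
  have h3 : Module.finrank ℝ V ≠ 0 := by
    intro h0
    exact hne (Submodule.finrank_eq_zero.mp h0)
  omega

variable {nn : ℕ}

lemma exists_nonzero_eigen (F : Matrix (Fin nn) (Fin nn) ℝ) (h : ¬ IsNilpotent F) :
    ∃ (z : ℂ) (v : Fin nn → ℂ), z ≠ 0 ∧ v ≠ 0 ∧ cx F *ᵥ v = z • v := by
  set Fc := cx F with hFc
  have hFcnil : ¬ IsNilpotent Fc := by
    rintro ⟨j, hj⟩
    refine h ⟨j, ?_⟩
    have : cx (F ^ j) = cx (0 : Matrix (Fin nn) (Fin nn) ℝ) := by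
      rw [cx_pow, ← hFc, hj]
      ext i j'; simp [cx]
    ext i j'
    have := congrFun (congrFun this i) j'
    simpa [cx] using this
  set p := Fc.charpoly with hp
  have hmonic : p.Monic := Fc.charpoly_monic
  have hdeg : p.natDegree = nn := by
    rw [hp, Matrix.charpoly_natDegree_eq_dim, Fintype.card_fin]
  have hsplits : Splits p := IsAlgClosed.splits p
  -- there is a nonzero root
  have hroot : ∃ z ∈ p.roots, z ≠ 0 := by
    by_contra hall
    push_neg at hall
    have hprod : p = (Multiset.map (fun a => X - Polynomial.C a) p.roots).prod :=
      hsplits.eq_prod_roots_of_monic hmonic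
    have hX : Multiset.map (fun a => X - Polynomial.C a) p.roots
        = Multiset.map (fun _ => (X : ℂ[X])) p.roots := by
      apply Multiset.map_congr rfl
      intro z hz
      rw [hall z hz, map_zero, sub_zero]
    have hcard : Multiset.card p.roots = nn := by
      rw [splits_iff_card_roots.mp hsplits, hdeg]
    have hpX : p = X ^ nn := by
      rw [hprod, hX, Multiset.map_const', Multiset.prod_replicate, hcard]
    have : aeval Fc p = 0 := Fc.aeval_self_charpoly
    rw [hpX] at this
    simp only [map_pow, aeval_X] at this
    exact hFcnil ⟨nn, this⟩
  obtain ⟨z, hzmem, hzne⟩ := hroot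
  have hzroot : p.IsRoot z := (mem_roots (hmonic.ne_zero)).mp hzmem
  -- det (z • 1 - Fc) = 0
  have hdet : (z • (1 : Matrix (Fin nn) (Fin nn) ℂ) - Fc).det = 0 := by
    have h1 := (Polynomial.evalRingHom z).map_det (Matrix.charmatrix Fc)
    have h2 : (Polynomial.evalRingHom z) (Matrix.charmatrix Fc).det = 0 := by
      rw [show (Matrix.charmatrix Fc).det = p from rfl]
      simpa [Polynomial.coe_evalRingHom] using hzroot
    have h3 : (Polynomial.evalRingHom z).mapMatrix (Matrix.charmatrix Fc)
        = z • (1 : Matrix (Fin nn) (Fin nn) ℂ) - Fc := by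
      ext i j
      by_cases hij : i = j
      · subst hij
        simp [Matrix.charmatrix_apply, Matrix.one_apply, Matrix.diagonal_apply]
      · simp [Matrix.charmatrix_apply, Matrix.one_apply, Matrix.diagonal_apply, hij]
    rw [← h3, ← h1, h2]
  obtain ⟨v, hvne, hv⟩ := Matrix.exists_mulVec_eq_zero_iff.mpr hdet
  refine ⟨z, v, hzne, hvne, ?_⟩
  have := hv
  rw [Matrix.sub_mulVec, sub_eq_zero] at this
  rw [← this, Matrix.smul_mulVec, Matrix.one_mulVec]

variable {nn pp : ℕ}

lemma deflation_step (F : Matrix (Fin nn) (Fin nn) ℝ) (C : Matrix (Fin pp) (Fin nn) ℝ)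
    (hH : ∀ (z : ℂ) (v : Fin nn → ℂ), z ≠ 0 → cx F *ᵥ v = z • v → cx C *ᵥ v = 0 → v = 0)
    (hnn : ¬ IsNilpotent F)
    (hz : ∃ (z : ℂ) (v : Fin nn → ℂ), z ≠ 0 ∧ v ≠ 0 ∧ cx F *ᵥ v = z • v) :
    ∃ (L : Matrix (Fin nn) (Fin pp) ℝ) (V : Submodule ℝ (Fin nn → ℝ)),
      V ≠ ⊥ ∧ (∀ x ∈ V, F *ᵥ x ∈ V) ∧ (∀ x ∈ V, F *ᵥ x = 0 → x = 0) ∧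
      (∀ x, (L * C) *ᵥ x ∈ V) ∧ (∀ x ∈ V, (F - L * C) *ᵥ ((F - L * C) *ᵥ x) = 0) := by
  obtain ⟨z, v, hzne, hvne, hv⟩ := hz
  set a : Fin nn → ℝ := fun i => (v i).re with ha
  set b : Fin nn → ℝ := fun i => (v i).im with hb
  have hFa : F *ᵥ a = z.re • a - z.im • b := by
    funext i
    have h1 := mulVec_cx_re F v i
    rw [hv] at h1
    have : ((z • v) i).re = z.re * a i - z.im * b i := by
      simp [Complex.mul_re, ha, hb]
    rw [this] at h1
    simpa [sub_eq_iff_eq_add] using h1.symm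
  have hFb : F *ᵥ b = z.im • a + z.re • b := by
    funext i
    have h1 := mulVec_cx_im F v i
    rw [hv] at h1
    have : ((z • v) i).im = z.im * a i + z.re * b i := by
      simp [Complex.mul_im, ha, hb]; ring
    rw [this] at h1
    simpa using h1.symm
  have hab_ne : ¬ (a = 0 ∧ b = 0) := by
    rintro ⟨ha0, hb0⟩
    apply hvne
    funext i
    have h1 : (v i).re = 0 := congrFun ha0 i
    have h2 : (v i).im = 0 := congrFun hb0 i
    exact Complex.ext h1 h2
  have hFcomb : ∀ s t : ℝ, F *ᵥ (s • a + t • b)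
      = (s*z.re + t*z.im) • a + (t*z.re - s*z.im) • b := by
    intro s t
    rw [Matrix.mulVec_add, Matrix.mulVec_smul, Matrix.mulVec_smul, hFa, hFb]
    module
  by_cases him : z.im = 0
  · -- real eigenvalue case
    have hre : z.re ≠ 0 := fun h0 => hzne (Complex.ext h0 him)
    have hFa' : F *ᵥ a = z.re • a := by rw [hFa, him]; simp
    have hFb' : F *ᵥ b = z.re • b := by rw [hFb, him]; simp
    -- pick a nonzero real eigenvector u
    obtain ⟨u, hune, hFu⟩ : ∃ u : Fin nn → ℝ, u ≠ 0 ∧ F *ᵥ u = z.re • u := by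
      by_cases ha0 : a = 0
      · exact ⟨b, fun hb0 => hab_ne ⟨ha0, hb0⟩, hFb'⟩
      · exact ⟨a, ha0, hFa'⟩
    have hCu : C *ᵥ u ≠ 0 := by
      intro h0
      apply hune
      have h1 : cx F *ᵥ (fun i => ((u i : ℂ))) = z • (fun i => ((u i : ℂ))) := by
        rw [mulVec_cx_ofReal, hFu]
        funext i
        have hzz : z = (z.re : ℂ) := by
          apply Complex.ext <;> simp [him]
        rw [hzz]
        simp only [Pi.smul_apply, smul_eq_mul]
        simp [mul_comm]
      have h2 : cx C *ᵥ (fun i => ((u i : ℂ))) = 0 := by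
        rw [mulVec_cx_ofReal, h0]
        funext i; simp
      have := hH z _ hzne h1 h2
      funext i
      have := congrFun this i
      simpa using this
    set q := (C *ᵥ u) ⬝ᵥ (C *ᵥ u) with hqdef
    have hq : q ≠ 0 := fun h0 => hCu ((dotProduct_self_eq_zero).mp h0)
    refine ⟨(z.re / q) • vecMulVec u (C *ᵥ u), Submodule.span ℝ {u}, ?_, ?_, ?_, ?_, ?_⟩
    · intro hbot
      have := Submodule.mem_span_singleton_self (R := ℝ) u
      rw [hbot, Submodule.mem_bot] at this
      exact hune this
    · intro x hx
      obtain ⟨c, rfl⟩ := Submodule.mem_span_singleton.mp hx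
      rw [Matrix.mulVec_smul, hFu]
      exact Submodule.smul_mem _ _ (Submodule.smul_mem _ _ (Submodule.mem_span_singleton_self u))
    · intro x hx hx0
      obtain ⟨c, rfl⟩ := Submodule.mem_span_singleton.mp hx
      rw [Matrix.mulVec_smul, hFu, smul_smul] at hx0
      rcases smul_eq_zero.mp hx0 with h | h
      · rcases mul_eq_zero.mp h with h' | h'
        · rw [h']; simp
        · exact absurd h' hre
      · exact absurd h hune
    · intro x
      rw [← Matrix.mulVec_mulVec, Matrix.smul_mulVec, vecMulVec_mulVec]
      exact Submodule.smul_mem _ _ (Submodule.smul_mem _ _ (Submodule.mem_span_singleton_self u))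
    · intro x hx
      obtain ⟨c, rfl⟩ := Submodule.mem_span_singleton.mp hx
      have key : (F - (z.re / q) • vecMulVec u (C *ᵥ u) * C) *ᵥ u = 0 := by
        rw [Matrix.sub_mulVec, ← Matrix.mulVec_mulVec, Matrix.smul_mulVec,
          vecMulVec_mulVec, hFu, ← hqdef, smul_smul, div_mul_cancel₀ _ hq, sub_self]
      rw [Matrix.mulVec_smul, key, smul_zero, Matrix.mulVec_zero]
  · -- complex eigenvalue case
    have hab_ind : ∀ s t : ℝ, s • a + t • b = 0 → s = 0 ∧ t = 0 := by
      intro s t hst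
      by_contra hcon
      have hst' : s ≠ 0 ∨ t ≠ 0 := by tauto
      have h2 : (s * z.re + t * z.im) • a + (t * z.re - s * z.im) • b = 0 := by
        rw [← hFcomb, hst, Matrix.mulVec_zero]
      have h3 : z.im • (t • a - s • b) = 0 := by
        have hcalc : z.im • (t • a - s • b)
            = ((s * z.re + t * z.im) • a + (t * z.re - s * z.im) • b)
              - z.re • (s • a + t • b) := by module
        rw [hcalc, h2, hst, smul_zero, sub_zero]
      have h4 : t • a - s • b = 0 := by
        rcases smul_eq_zero.mp h3 with h | h
        · exact absurd h him
        · exact h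
      have hss : s * s + t * t ≠ 0 := by
        rcases hst' with h | h
        · nlinarith [mul_self_nonneg t, mul_self_pos.mpr h]
        · nlinarith [mul_self_nonneg s, mul_self_pos.mpr h]
      have ha0 : a = 0 := by
        have h5 : (s * s + t * t) • a = s • (s • a + t • b) + t • (t • a - s • b) := by
          module
        rw [hst, h4, smul_zero, smul_zero, add_zero] at h5
        rcases smul_eq_zero.mp h5 with h | h
        · exact absurd h hss
        · exact h
      have hb0 : b = 0 := by
        have h5 : (s * s + t * t) • b = t • (s • a + t • b) - s • (t • a - s • b) := by
          module
        rw [hst, h4, smul_zero, smul_zero, sub_zero] at h5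
        rcases smul_eq_zero.mp h5 with h | h
        · exact absurd h hss
        · exact h
      exact hab_ne ⟨ha0, hb0⟩
    have hinjAB : ∀ x ∈ Submodule.span ℝ {a, b}, F *ᵥ x = 0 → x = 0 := by
      intro x hx hx0
      obtain ⟨s, t, hst⟩ := Submodule.mem_span_pair.mp hx
      rw [← hst] at hx0
      rw [hFcomb] at hx0
      obtain ⟨hc1, hc2⟩ := hab_ind _ _ hx0
      have hzz : z.re * z.re + z.im * z.im ≠ 0 := by
        nlinarith [mul_self_nonneg z.re, mul_self_pos.mpr him]
      have hs : s = 0 := by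
        have hID : s * (z.re * z.re + z.im * z.im)
            = z.re * (s * z.re + t * z.im) - z.im * (t * z.re - s * z.im) := by ring
        rw [hc1, hc2, mul_zero, mul_zero, sub_zero] at hID
        rcases mul_eq_zero.mp hID with h | h
        · exact h
        · exact absurd h hzz
      have ht : t = 0 := by
        have hID : t * (z.re * z.re + z.im * z.im)
            = z.im * (s * z.re + t * z.im) + z.re * (t * z.re - s * z.im) := by ring
        rw [hc1, hc2, mul_zero, mul_zero, add_zero] at hID
        rcases mul_eq_zero.mp hID with h | h
        · exact h
        · exact absurd h hzz
      rw [← hst, hs, ht, zero_smul, zero_smul, add_zero]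
    have hCab : ¬ (C *ᵥ a = 0 ∧ C *ᵥ b = 0) := by
      rintro ⟨hca, hcb⟩
      apply hvne
      apply hH z v hzne hv
      funext i
      apply Complex.ext
      · rw [mulVec_cx_re]
        have := congrFun hca i
        simpa using this
      · rw [mulVec_cx_im]
        have := congrFun hcb i
        simpa using this
    by_cases hker : ∃ u, u ∈ Submodule.span ℝ {a, b} ∧ u ≠ 0 ∧ C *ᵥ u = 0
    · -- C has a kernel direction inside V
      obtain ⟨u, huV, hune, hCu⟩ := hker
      obtain ⟨c, d, hcd⟩ := Submodule.mem_span_pair.mp huV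
      set c' := c * z.re + d * z.im with hc'
      set d' := d * z.re - c * z.im with hd'
      have hFu : F *ᵥ u = c' • a + d' • b := by rw [← hcd, hFcomb]
      set w := F *ᵥ u with hw
      set Δ := c * d' - d * c' with hΔdef
      have hcd0 : ¬ (c = 0 ∧ d = 0) := by
        rintro ⟨rfl, rfl⟩
        apply hune
        rw [← hcd, zero_smul, zero_smul, add_zero]
      have hΔ : Δ ≠ 0 := by
        have h1 : Δ = -z.im * (c * c + d * d) := by rw [hΔdef, hc', hd']; ring
        have h2 : c * c + d * d ≠ 0 := by
          have : c ≠ 0 ∨ d ≠ 0 := by tauto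
          rcases this with h | h
          · nlinarith [mul_self_nonneg d, mul_self_pos.mpr h]
          · nlinarith [mul_self_nonneg c, mul_self_pos.mpr h]
        rw [h1]
        exact mul_ne_zero (neg_ne_zero.mpr him) h2
      have haw : Δ • a = d' • u - d • w := by rw [← hcd, hFu]; module
      have hbw : Δ • b = c • w - c' • u := by rw [← hcd, hFu]; module
      have haMem : a ∈ Submodule.span ℝ {u, w} := by
        apply Submodule.mem_span_pair.mpr
        refine ⟨Δ⁻¹ * d', -(Δ⁻¹ * d), ?_⟩
        have h6 : Δ⁻¹ • (Δ • a) = Δ⁻¹ • (d' • u - d • w) := by rw [haw]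
        rw [smul_smul, inv_mul_cancel₀ hΔ, one_smul] at h6
        rw [h6]; module
      have hbMem : b ∈ Submodule.span ℝ {u, w} := by
        apply Submodule.mem_span_pair.mpr
        refine ⟨-(Δ⁻¹ * c'), Δ⁻¹ * c, ?_⟩
        have h6 : Δ⁻¹ • (Δ • b) = Δ⁻¹ • (c • w - c' • u) := by rw [hbw]
        rw [smul_smul, inv_mul_cancel₀ hΔ, one_smul] at h6
        rw [h6]; module
      have hCw : C *ᵥ w ≠ 0 := by
        intro hcw
        apply hCab
        have hCu' : c • (C *ᵥ a) + d • (C *ᵥ b) = 0 := by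
          rw [← Matrix.mulVec_smul, ← Matrix.mulVec_smul, ← Matrix.mulVec_add, hcd, hCu]
        have hCw' : c' • (C *ᵥ a) + d' • (C *ᵥ b) = 0 := by
          rw [← Matrix.mulVec_smul, ← Matrix.mulVec_smul, ← Matrix.mulVec_add, ← hFu, hcw]
        constructor
        · have h1 : Δ • (C *ᵥ a) = d' • (c • (C *ᵥ a) + d • (C *ᵥ b))
              - d • (c' • (C *ᵥ a) + d' • (C *ᵥ b)) := by rw [hΔdef]; module
          rw [hCu', hCw', smul_zero, smul_zero, sub_zero] at h1
          rcases smul_eq_zero.mp h1 with h | h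
          · exact absurd h hΔ
          · exact h
        · have h1 : Δ • (C *ᵥ b) = c • (c' • (C *ᵥ a) + d' • (C *ᵥ b))
              - c' • (c • (C *ᵥ a) + d • (C *ᵥ b)) := by rw [hΔdef]; module
          rw [hCu', hCw', smul_zero, smul_zero, sub_zero] at h1
          rcases smul_eq_zero.mp h1 with h | h
          · exact absurd h hΔ
          · exact h
      set q := (C *ᵥ w) ⬝ᵥ (C *ᵥ w) with hqdef
      have hq : q ≠ 0 := fun h0 => hCw ((dotProduct_self_eq_zero).mp h0)
      set L := q⁻¹ • vecMulVec (F *ᵥ w) (C *ᵥ w) with hL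
      have hLCx : ∀ x, (L * C) *ᵥ x
          = (q⁻¹ * ((C *ᵥ w) ⬝ᵥ (C *ᵥ x))) • (F *ᵥ w) := by
        intro x
        rw [← Matrix.mulVec_mulVec, hL, Matrix.smul_mulVec, vecMulVec_mulVec, smul_smul]
      have hwMem : w ∈ Submodule.span ℝ {u, w} :=
        Submodule.subset_span (Set.mem_insert_of_mem _ (Set.mem_singleton w))
      have huMem : u ∈ Submodule.span ℝ {u, w} :=
        Submodule.subset_span (Set.mem_insert _ _)
      have hFwV : F *ᵥ w ∈ Submodule.span ℝ {u, w} := by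
        have hcomp : F *ᵥ w = (c' * z.re + d' * z.im) • a + (d' * z.re - c' * z.im) • b := by
          rw [hFu, hFcomb]
        rw [hcomp]
        exact add_mem (Submodule.smul_mem _ _ haMem) (Submodule.smul_mem _ _ hbMem)
      have hsub : Submodule.span ℝ {u, w} ≤ Submodule.span ℝ {a, b} := by
        rw [Submodule.span_le]
        intro y hy
        rcases Set.mem_insert_iff.mp hy with rfl | hy'
        · exact huV
        · rw [Set.mem_singleton_iff] at hy'
          subst hy'
          exact Submodule.mem_span_pair.mpr ⟨c', d', hFu.symm⟩
      refine ⟨L, Submodule.span ℝ {u, w}, ?_, ?_, ?_, ?_, ?_⟩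
      · intro hbot
        rw [hbot, Submodule.mem_bot] at huMem
        exact hune huMem
      · intro x hx
        obtain ⟨s, t, hst⟩ := Submodule.mem_span_pair.mp hx
        rw [← hst, Matrix.mulVec_add, Matrix.mulVec_smul, Matrix.mulVec_smul, ← hw]
        exact add_mem (Submodule.smul_mem _ _ hwMem) (Submodule.smul_mem _ _ hFwV)
      · intro x hx hx0
        exact hinjAB x (hsub hx) hx0
      · intro x
        rw [hLCx]
        exact Submodule.smul_mem _ _ hFwV
      · intro x hx
        obtain ⟨s, t, hst⟩ := Submodule.mem_span_pair.mp hx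
        have e1 : (F - L * C) *ᵥ u = w := by
          rw [Matrix.sub_mulVec, hLCx, hCu, dotProduct_zero, mul_zero, zero_smul,
            sub_zero, ← hw]
        have e2 : (F - L * C) *ᵥ w = 0 := by
          rw [Matrix.sub_mulVec, hLCx, ← hqdef, inv_mul_cancel₀ hq, one_smul, sub_self]
        rw [← hst, Matrix.mulVec_add, Matrix.mulVec_smul, Matrix.mulVec_smul, e1, e2,
          smul_zero, add_zero, Matrix.mulVec_smul, e2, smul_zero]
    · -- C is injective on V
      push_neg at hker
      have hCab_ind : ∀ s t : ℝ, s • (C *ᵥ a) + t • (C *ᵥ b) = 0 → s = 0 ∧ t = 0 := by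
        intro s t hst
        have hx : C *ᵥ (s • a + t • b) = 0 := by
          rw [Matrix.mulVec_add, Matrix.mulVec_smul, Matrix.mulVec_smul, hst]
        have hx0 : s • a + t • b = 0 := by
          by_contra hne
          exact hker _ (Submodule.mem_span_pair.mpr ⟨s, t, rfl⟩) hne hx
        exact hab_ind s t hx0
      set Ca := C *ᵥ a with hCa
      set Cb := C *ᵥ b with hCb
      set α := Ca ⬝ᵥ Ca with hα
      set β := Ca ⬝ᵥ Cb with hβ
      set γ := Cb ⬝ᵥ Cb with hγ
      set Δ := α * γ - β * β with hΔdef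
      have hcomm : Cb ⬝ᵥ Ca = β := by rw [hβ, dotProduct_comm]
      have hΔ : Δ ≠ 0 := by
        intro h0
        have hz1 : (γ • Ca - β • Cb) ⬝ᵥ (γ • Ca - β • Cb) = γ * Δ := by
          simp only [sub_dotProduct, dotProduct_sub, smul_dotProduct,
            dotProduct_smul, smul_eq_mul, hcomm]
          rw [← hα, ← hβ, ← hγ, hΔdef]
          ring
        rw [h0, mul_zero] at hz1
        have hz2 : γ • Ca - β • Cb = 0 := dotProduct_self_eq_zero.mp hz1
        have hz3 : γ • Ca + (-β) • Cb = 0 := by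
          rw [← hz2]; module
        obtain ⟨hγ0, hβ0⟩ := hCab_ind _ _ hz3
        have hCb0 : Cb = 0 := dotProduct_self_eq_zero.mp (by rw [← hγ, hγ0])
        have h1 := hCab_ind 0 1 (by rw [hCb0]; simp)
        exact one_ne_zero h1.2
      set y1 := Δ⁻¹ • (γ • Ca - β • Cb) with hy1
      set y2 := Δ⁻¹ • (α • Cb - β • Ca) with hy2
      have hy1a : y1 ⬝ᵥ Ca = 1 := by
        simp only [hy1, smul_dotProduct, sub_dotProduct, smul_eq_mul, hcomm,
          ← hα, ← hβ]
        rw [show γ * α - β * β = Δ by rw [hΔdef]; ring]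
        exact inv_mul_cancel₀ hΔ
      have hy1b : y1 ⬝ᵥ Cb = 0 := by
        simp only [hy1, smul_dotProduct, sub_dotProduct, smul_eq_mul, hcomm,
          ← hβ, ← hγ]
        ring
      have hy2a : y2 ⬝ᵥ Ca = 0 := by
        simp only [hy2, smul_dotProduct, sub_dotProduct, smul_eq_mul, hcomm,
          ← hα, ← hβ]
        ring
      have hy2b : y2 ⬝ᵥ Cb = 1 := by
        simp only [hy2, smul_dotProduct, sub_dotProduct, smul_eq_mul, hcomm,
          ← hβ, ← hγ]
        rw [show α * γ - β * β = Δ by rw [hΔdef]]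
        exact inv_mul_cancel₀ hΔ
      set L := vecMulVec (F *ᵥ a) y1 + vecMulVec (F *ᵥ b) y2 with hL
      have hLCx : ∀ x, (L * C) *ᵥ x
          = (y1 ⬝ᵥ (C *ᵥ x)) • (F *ᵥ a) + (y2 ⬝ᵥ (C *ᵥ x)) • (F *ᵥ b) := by
        intro x
        rw [← Matrix.mulVec_mulVec, hL, Matrix.add_mulVec, vecMulVec_mulVec, vecMulVec_mulVec]
      have haMem : a ∈ Submodule.span ℝ {a, b} :=
        Submodule.subset_span (Set.mem_insert _ _)
      have hbMem : b ∈ Submodule.span ℝ {a, b} :=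
        Submodule.subset_span (Set.mem_insert_of_mem _ (Set.mem_singleton b))
      have hFaV : F *ᵥ a ∈ Submodule.span ℝ {a, b} := by
        rw [hFa]
        exact sub_mem (Submodule.smul_mem _ _ haMem) (Submodule.smul_mem _ _ hbMem)
      have hFbV : F *ᵥ b ∈ Submodule.span ℝ {a, b} := by
        rw [hFb]
        exact add_mem (Submodule.smul_mem _ _ haMem) (Submodule.smul_mem _ _ hbMem)
      have e1 : (F - L * C) *ᵥ a = 0 := by
        rw [Matrix.sub_mulVec, hLCx, ← hCa, hy1a, hy2a, one_smul, zero_smul, add_zero, sub_self]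
      have e2 : (F - L * C) *ᵥ b = 0 := by
        rw [Matrix.sub_mulVec, hLCx, ← hCb, hy1b, hy2b, one_smul, zero_smul, zero_add, sub_self]
      refine ⟨L, Submodule.span ℝ {a, b}, ?_, ?_, ?_, ?_, ?_⟩
      · intro hbot
        apply hab_ne
        constructor
        · have := haMem; rwa [hbot, Submodule.mem_bot] at this
        · have := hbMem; rwa [hbot, Submodule.mem_bot] at this
      · intro x hx
        obtain ⟨s, t, hst⟩ := Submodule.mem_span_pair.mp hx
        rw [← hst, Matrix.mulVec_add, Matrix.mulVec_smul, Matrix.mulVec_smul]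
        exact add_mem (Submodule.smul_mem _ _ hFaV) (Submodule.smul_mem _ _ hFbV)
      · exact hinjAB
      · intro x
        rw [hLCx]
        exact add_mem (Submodule.smul_mem _ _ hFaV) (Submodule.smul_mem _ _ hFbV)
      · intro x hx
        obtain ⟨s, t, hst⟩ := Submodule.mem_span_pair.mp hx
        rw [← hst, Matrix.mulVec_add, Matrix.mulVec_smul, Matrix.mulVec_smul, e1, e2,
          smul_zero, smul_zero, add_zero, Matrix.mulVec_zero]



lemma deadbeat {nn pp : ℕ} (C : Matrix (Fin pp) (Fin nn) ℝ) (F : Matrix (Fin nn) (Fin nn) ℝ)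
    (hH : ∀ (z : ℂ) (v : Fin nn → ℂ), z ≠ 0 → cx F *ᵥ v = z • v → cx C *ᵥ v = 0 → v = 0) :
    ∃ L : Matrix (Fin nn) (Fin pp) ℝ, IsNilpotent (F - L * C) := by
  suffices h : ∀ (k : ℕ) (F : Matrix (Fin nn) (Fin nn) ℝ),
      (∀ (z : ℂ) (v : Fin nn → ℂ), z ≠ 0 → cx F *ᵥ v = z • v → cx C *ᵥ v = 0 → v = 0) →
      nn - Module.finrank ℝ (GK F.mulVecLin) ≤ k →
      ∃ L : Matrix (Fin nn) (Fin pp) ℝ, IsNilpotent (F - L * C) by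
    exact h nn F hH (by omega)
  intro k
  induction k with
  | zero =>
    intro F hH' hk
    have hle : Module.finrank ℝ (GK F.mulVecLin) ≤ nn := by
      have := Submodule.finrank_le (GK F.mulVecLin)
      simpa [Module.finrank_pi] using this
    have htop : GK F.mulVecLin = ⊤ := by
      apply Submodule.eq_top_of_finrank_eq
      have : Module.finrank ℝ (Fin nn → ℝ) = nn := by simp [Module.finrank_pi]
      omega
    refine ⟨0, ?_⟩
    rw [Matrix.zero_mul, sub_zero]
    exact isNilpotent_of_GK_top htop
  | succ k ih =>
    intro F hH' hk
    by_cases hnil : IsNilpotent F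
    · exact ⟨0, by rw [Matrix.zero_mul, sub_zero]; exact hnil⟩
    · obtain ⟨L₀, V, h1, h2, h3, h4, h5⟩ :=
        deflation_step F C hH' hnil (exists_nonzero_eigen F hnil)
      have hlt := GK_lt F L₀ C V h1 h2 h3 h4 h5
      have hH'' : ∀ (z : ℂ) (v : Fin nn → ℂ), z ≠ 0 →
          cx (F - L₀ * C) *ᵥ v = z • v → cx C *ᵥ v = 0 → v = 0 := by
        intro z v hz hfv hcv
        apply hH' z v hz ?_ hcv
        rw [cx_sub, cx_mul, Matrix.sub_mulVec, ← Matrix.mulVec_mulVec, hcv,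
          Matrix.mulVec_zero, sub_zero] at hfv
        exact hfv
      have hle : Module.finrank ℝ (GK (F - L₀ * C).mulVecLin) ≤ nn := by
        have := Submodule.finrank_le (GK (F - L₀ * C).mulVecLin)
        simpa [Module.finrank_pi] using this
      obtain ⟨L₁, hL₁⟩ := ih (F - L₀ * C) hH'' (by omega)
      refine ⟨L₀ + L₁, ?_⟩
      rwa [Matrix.add_mul, ← sub_sub]

end

end Stmt10Aux

open Stmt10Aux in
/-- Under the persistence-of-excitation assumption and the model-based solvability
conditions, there exist matrices T₁, T₃, T₄ with X_f = T₁U_p + T₃X_p + T₄Y_f,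
(T₃, C) reconstructable and C·T₁ of full column rank. -/
theorem stmt_10 {n m p r N : ℕ}
    (A : Matrix (Fin n) (Fin n) ℝ) (B : Matrix (Fin n) (Fin m) ℝ)
    (C : Matrix (Fin p) (Fin n) ℝ) (E : Matrix (Fin n) (Fin r) ℝ)
    (U_p : Matrix (Fin m) (Fin N) ℝ) (D_p : Matrix (Fin r) (Fin N) ℝ)
    (X_p X_f : Matrix (Fin n) (Fin N) ℝ) (Y_f : Matrix (Fin p) (Fin N) ℝ)
    (hdata : X_f = A * X_p + B * U_p + E * D_p)
    (hYf : Y_f = C * X_f)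
    (hFRR : (Matrix.fromRows U_p (Matrix.fromRows D_p X_p)).rank = m + r + n)
    (hstrong : ∀ z : ℂ, z ≠ 0 →
      (Matrix.fromBlocks
          (z • (1 : Matrix (Fin n) (Fin n) ℂ) - A.map (algebraMap ℝ ℂ))
          (-(E.map (algebraMap ℝ ℂ)))
          (C.map (algebraMap ℝ ℂ)) 0).rank = n + r)
    (hCBCE : (Matrix.fromCols (C * B) (C * E)).rank = m + r) :
    ∃ (T₁ : Matrix (Fin n) (Fin m) ℝ) (T₃ : Matrix (Fin n) (Fin n) ℝ)
      (T₄ : Matrix (Fin n) (Fin p) ℝ),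
        X_f = T₁ * U_p + T₃ * X_p + T₄ * Y_f ∧
        (∃ L : Matrix (Fin n) (Fin p) ℝ, IsNilpotent (T₃ - L * C)) ∧
        (C * T₁).rank = m := by
  classical
  -- injectivity of [CB CE]
  have hinjCols : Function.Injective (Matrix.fromCols (C * B) (C * E)).mulVecLin := by
    apply (rank_eq_card_iff_inj _).mp
    rw [show Fintype.card (Fin m ⊕ Fin r) = m + r by simp]
    exact hCBCE
  have hColsKer : ∀ y : (Fin m ⊕ Fin r) → ℝ,
      (Matrix.fromCols (C * B) (C * E)) *ᵥ y = 0 → y = 0 := by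
    intro y hy
    have h0 : (Matrix.fromCols (C * B) (C * E)).mulVecLin y
        = (Matrix.fromCols (C * B) (C * E)).mulVecLin 0 := by
      rw [map_zero, Matrix.mulVecLin_apply]; exact hy
    exact hinjCols h0
  -- a left inverse S of C*E
  have hGker : LinearMap.ker (C * E).mulVecLin = ⊥ := by
    rw [LinearMap.ker_eq_bot']
    intro x hx
    rw [Matrix.mulVecLin_apply] at hx
    have hy : (Matrix.fromCols (C * B) (C * E)) *ᵥ ((0 : Fin m → ℝ) ⊕ᵥ x) = 0 := by
      rw [Matrix.fromCols_mulVec_sumElim, hx, Matrix.mulVec_zero, zero_add]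
    have h0 := hColsKer _ hy
    funext j
    exact congrFun h0 (Sum.inr j)
  obtain ⟨g, hg⟩ := LinearMap.exists_leftInverse_of_injective (C * E).mulVecLin hGker
  set S := LinearMap.toMatrix' g with hSdef
  have hSG : S * (C * E) = 1 := by
    have h1 : LinearMap.toMatrix' (g ∘ₗ (C * E).mulVecLin) = S * (C * E) := by
      rw [LinearMap.toMatrix'_comp]
      congr 1
      exact LinearMap.toMatrix'_toLin' (C * E)
    rw [← h1, hg]
    exact LinearMap.toMatrix'_id
  refine ⟨B - E * S * (C * B), A - E * S * (C * A), E * S, ?_, ?_, ?_⟩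
  · -- the data equation
    have hT4CE : E * S * (C * E) = E := by
      rw [Matrix.mul_assoc, hSG, Matrix.mul_one]
    rw [hYf, hdata]
    simp only [Matrix.mul_add, Matrix.sub_mul, ← Matrix.mul_assoc]
    rw [show E * S * C * E = E by rw [Matrix.mul_assoc (E * S) C E]; exact hT4CE]
    abel
  · -- reconstructability
    apply deadbeat
    intro z v hz hv hcv
    have hBinj : Function.Injective (Matrix.fromBlocks
        (z • (1 : Matrix (Fin n) (Fin n) ℂ) - cx A) (-(cx E)) (cx C) 0).mulVecLin := by
      apply (rank_eq_card_iff_inj _).mp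
      rw [show Fintype.card (Fin n ⊕ Fin r) = n + r by simp]
      exact hstrong z hz
    set w := cx S *ᵥ (cx C *ᵥ (cx A *ᵥ v)) with hwdef
    have hsplit : cx (A - E * S * (C * A)) *ᵥ v = cx A *ᵥ v - cx E *ᵥ w := by
      rw [cx_sub, Matrix.sub_mulVec]
      congr 1
      rw [cx_mul, cx_mul, cx_mul, hwdef]
      simp only [Matrix.mulVec_mulVec]
      rw [Matrix.mul_assoc (cx E) (cx S) (cx C * cx A)]
    have hv' : cx A *ᵥ v - cx E *ᵥ w = z • v := by rw [← hsplit]; exact hv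
    have hker : (Matrix.fromBlocks (z • (1 : Matrix (Fin n) (Fin n) ℂ) - cx A)
        (-(cx E)) (cx C) 0) *ᵥ (v ⊕ᵥ (-w)) = 0 := by
      rw [Matrix.fromBlocks_mulVec]
      have hfst : (z • (1 : Matrix (Fin n) (Fin n) ℂ) - cx A) *ᵥ v + (-(cx E)) *ᵥ (-w) = 0 := by
        rw [Matrix.sub_mulVec, Matrix.neg_mulVec, Matrix.mulVec_neg, neg_neg,
          Matrix.smul_mulVec, Matrix.one_mulVec, ← hv']
        abel
      have hsnd : cx C *ᵥ v + (0 : Matrix (Fin p) (Fin r) ℂ) *ᵥ (-w) = 0 := by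
        rw [hcv, Matrix.zero_mulVec, add_zero]
      funext i
      cases i with
      | inl i => simpa using congrFun hfst i
      | inr i => simpa using congrFun hsnd i
    have h0 : (v ⊕ᵥ (-w)) = 0 := by
      apply hBinj
      rw [map_zero, Matrix.mulVecLin_apply]
      exact hker
    funext i
    exact congrFun h0 (Sum.inl i)
  · -- full column rank of C * T₁
    have hCT1 : C * (B - E * S * (C * B)) = C * B - C * E * (S * (C * B)) := by
      rw [Matrix.mul_sub]
      congr 1
      simp only [← Matrix.mul_assoc]
    have hinjT1 : ∀ x : Fin m → ℝ, (C * (B - E * S * (C * B))) *ᵥ x = 0 → x = 0 := by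
      intro x hx
      rw [hCT1, Matrix.sub_mulVec] at hx
      have hy : (Matrix.fromCols (C * B) (C * E)) *ᵥ (x ⊕ᵥ (-((S * (C * B)) *ᵥ x))) = 0 := by
        rw [Matrix.fromCols_mulVec_sumElim, Matrix.mulVec_neg, Matrix.mulVec_mulVec,
          ← sub_eq_add_neg]
        exact hx
      have h0 := hColsKer _ hy
      funext j
      exact congrFun h0 (Sum.inl j)
    have hinj : Function.Injective (C * (B - E * S * (C * B))).mulVecLin := by
      rw [← LinearMap.ker_eq_bot, LinearMap.ker_eq_bot']
      intro x hx
      exact hinjT1 x (by rw [← Matrix.mulVecLin_apply]; exact hx)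
    have h1 := (rank_eq_card_iff_inj (C * (B - E * S * (C * B)))).mpr hinj
    simpa using h1
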